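/- For a real number α, the mask (a_0,…,a_6) = (−1/16 − 3α/32, −3α/16, 9/16 + 3α/32, 1 + 3α/8, 9/16 + 3α/32, −3α/16, −1/16 − 3α/32) of the 4-point combined scheme is bell-shaped — i.e., a_j > 0 for all j ∈ {0,…,6}, a_j = a_{6−j} for all j ∈ {0,…,6}, and a_j < a_{j+1} for j ∈ {0, 1, 2} — if and only if −14/9 < α < −2/3. -/
import Mathlib


/-- The mask (a₀,…,a₆) of the 4-point combined scheme. -/
noncomputable def fourPointMask (α : ℝ) : Fin 7 → ℝ :=
  ![-1 / 16 - 3 * α / 32, -3 * α / 16, 9 / 16 + 3 * α / 32, 1 + 3 * α / 8,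
    9 / 16 + 3 * α / 32, -3 * α / 16, -1 / 16 - 3 * α / 32]

lemma fpm0 (α : ℝ) : fourPointMask α 0 = -1 / 16 - 3 * α / 32 := rfl
lemma fpm1 (α : ℝ) : fourPointMask α 1 = -3 * α / 16 := rfl
lemma fpm2 (α : ℝ) : fourPointMask α 2 = 9 / 16 + 3 * α / 32 := rfl
lemma fpm3 (α : ℝ) : fourPointMask α 3 = 1 + 3 * α / 8 := rfl
lemma fpm4 (α : ℝ) : fourPointMask α 4 = 9 / 16 + 3 * α / 32 := rfl
lemma fpm5 (α : ℝ) : fourPointMask α 5 = -3 * α / 16 := rfl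
lemma fpm6 (α : ℝ) : fourPointMask α 6 = -1 / 16 - 3 * α / 32 := rfl

/-- The mask of the 4-point combined scheme is bell-shaped iff −14/9 < α < −2/3. -/
theorem four_point_mask_bell_shaped_iff (α : ℝ) :
    ((∀ j : Fin 7, 0 < fourPointMask α j) ∧
     (∀ j : Fin 7, fourPointMask α j = fourPointMask α (6 - j)) ∧
     (∀ j : Fin 7, (j : ℕ) < 3 → fourPointMask α j < fourPointMask α (j + 1))) ↔
    -14 / 9 < α ∧ α < -2 / 3 := by
  constructor
  · rintro ⟨hpos, -, hmono⟩
    have h0 := hpos 0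
    have h2 := hmono 2 (by norm_num)
    rw [fpm0] at h0
    rw [show ((2:Fin 7)+1) = 3 from rfl, fpm2, fpm3] at h2
    constructor <;> linarith
  · rintro ⟨h1, h2⟩
    refine ⟨fun j => ?_, fun j => ?_, fun j hj => ?_⟩
    · fin_cases j <;>
        simp only [fpm0, fpm1, fpm2, fpm3, fpm4, fpm5, fpm6, Fin.mk_zero, Fin.mk_one] <;>
        first
          | linarith
          | (show (0:ℝ) < fourPointMask α _; rw [fourPointMask]; norm_num; linarith)
    · fin_cases j <;> rfl
    · fin_cases j <;> simp at hj ⊢ <;>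
        first
          | (rw [fpm0, fpm1]; linarith)
          | (rw [fpm1, fpm2]; linarith)
          | (rw [fpm2, fpm3]; linarith)
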